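/- Let D be an (n,k,λ)-difference set in a finite abelian group G of size n with characters {χ_i}_{i=1}^n. Define vectors e_i = (1/√k)(χ_i(g))_{g∈D} ∈ ℂ^k. Then {e_i}_{i=1}^n is an equiangular tight frame for ℂ^k. Conversely, if these vectors form an ETF, then D is a difference set. -/

import Mathlib

section Aux
set_option linter.unusedSectionVars false
variable {G : Type*} [AddCommGroup G] [Fintype G] [DecidableEq G]

private lemma mulconj_sum (D : Finset G) (ψ : AddChar G ℂ) :
    (starRingEnd ℂ) (∑ g ∈ D, ψ g) * (∑ g ∈ D, ψ g) = ∑ p ∈ D ×ˢ D, ψ (p.1 - p.2) := by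
  rw [Finset.sum_product, map_sum, Finset.sum_mul_sum, Finset.sum_comm]
  refine Finset.sum_congr rfl fun a _ => Finset.sum_congr rfl fun b _ => ?_
  rw [← AddChar.map_neg_eq_conj, ← AddChar.map_add_eq_mul, neg_add_eq_sub]

private lemma fiber_sum (D : Finset G) (ψ : AddChar G ℂ) :
    ∑ p ∈ D ×ˢ D, ψ (p.1 - p.2) =
      ∑ g : G, (((D ×ˢ D).filter (fun p => p.1 - p.2 = g)).card : ℂ) * ψ g := by
  rw [← Finset.sum_fiberwise_of_maps_to (g := fun p : G × G => p.1 - p.2)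
    (fun x _ => Finset.mem_univ _) (fun p => ψ (p.1 - p.2))]
  refine Finset.sum_congr rfl fun g _ => ?_
  rw [Finset.sum_congr rfl (fun p hp => by rw [(Finset.mem_filter.1 hp).2]),
    Finset.sum_const, nsmul_eq_mul]

private lemma filter_congr_ne (D : Finset G) {g : G} (hg : g ≠ 0) :
    ((D ×ˢ D).filter (fun p => p.1 ≠ p.2 ∧ p.1 - p.2 = g)) =
      ((D ×ˢ D).filter (fun p => p.1 - p.2 = g)) := by
  refine Finset.filter_congr fun p _ => ?_
  constructor
  · exact fun h => h.2
  · intro h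
    refine ⟨fun he => hg ?_, h⟩
    rw [← h, he, sub_self]

private lemma diag_filter (D : Finset G) :
    ((D ×ˢ D).filter (fun p => p.1 - p.2 = (0:G))).card = D.card := by
  rw [show ((D ×ˢ D).filter (fun p => p.1 - p.2 = (0:G))) = D.diag from
    by ext ⟨a, b⟩; simp only [Finset.mem_filter, Finset.mem_product, Finset.mem_diag, sub_eq_zero]; grind, Finset.diag_card]

end Aux

open Matrix in
/-- The vectors `e_i = (1/√k)(χ_i(g))_{g ∈ D}` (rows indexed by a difference set `D`,
columns by all characters of `G`) form an equiangular tight frame for `ℂ^k`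
if and only if `D` is a difference set in `G`. -/
theorem etf_iff_difference_set {G : Type*} [AddCommGroup G] [Fintype G] [DecidableEq G]
    (n k : ℕ) (hk : 0 < k) (hn : Fintype.card G = n)
    (D : Finset G) (hD : D.card = k)
    (d : Fin k ≃ {x // x ∈ D}) (χ : Fin n ≃ AddChar G ℂ)
    (E : Matrix (Fin k) (Fin n) ℂ)
    (hE : ∀ t i, E t i = ((Real.sqrt k : ℂ))⁻¹ * (χ i) ((d t : G))) :
    ((∀ i : Fin n, ∑ t, ‖E t i‖ ^ 2 = 1) ∧
      (∃ A : ℝ, 0 < A ∧ E * Eᴴ = (A : ℂ) • 1) ∧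
      (∃ c : ℝ, ∀ i j : Fin n, i ≠ j →
        ‖∑ t, (starRingEnd ℂ) (E t i) * E t j‖ = c)) ↔
    (∃ lam : ℕ, ∀ g : G, g ≠ 0 →
        ((D ×ˢ D).filter (fun p => p.1 ≠ p.2 ∧ p.1 - p.2 = g)).card = lam) := by
  classical
  have hn0 : 0 < n := hn ▸ Fintype.card_pos
  have hkR : (0:ℝ) < (k:ℝ) := by exact_mod_cast hk
  have hkC : ((k:ℕ):ℂ) ≠ 0 := by exact_mod_cast hk.ne'
  have hsq : ((Real.sqrt k : ℂ))⁻¹ * ((Real.sqrt k : ℂ))⁻¹ = ((k:ℕ):ℂ)⁻¹ := by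
    rw [← mul_inv, ← Complex.ofReal_mul, Real.mul_self_sqrt (Nat.cast_nonneg k),
      Complex.ofReal_natCast]
  set S : AddChar G ℂ → ℂ := fun ψ => ∑ g ∈ D, ψ g with hSdef
  have hS0 : S 0 = (k:ℂ) := by
    simp only [hSdef, AddChar.zero_apply, Finset.sum_const, nsmul_eq_mul, mul_one, hD]
  have hEntry : ∀ i j : Fin n,
      (∑ t, (starRingEnd ℂ) (E t i) * E t j) = ((k:ℕ):ℂ)⁻¹ * S (χ j - χ i) := by
    intro i j
    have h1 : ∀ t : Fin k, (starRingEnd ℂ) (E t i) * E t j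
        = ((k:ℕ):ℂ)⁻¹ * (χ j - χ i) ((d t : G)) := by
      intro t
      rw [hE t i, hE t j, map_mul (starRingEnd ℂ), map_inv₀, Complex.conj_ofReal,
        mul_mul_mul_comm, hsq, AddChar.sub_apply, AddChar.map_neg_eq_conj,
        mul_comm ((χ j) _)]
    simp_rw [h1, ← Finset.mul_sum]
    congr 1
    simp only [hSdef]
    rw [← Finset.sum_coe_sort D (fun g => (χ j - χ i) g)]
    exact Equiv.sum_comp d (fun x => (χ j - χ i) (x : G))
  constructor
  · rintro ⟨-, -, c, hc⟩
    have habs : ∀ ψ : AddChar G ℂ, ψ ≠ 0 → ‖S ψ‖ = c * k := by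
      intro ψ hψ
      have hij : χ.symm 0 ≠ χ.symm ψ := fun h => hψ (χ.symm.injective h).symm
      have h2 := hc _ _ hij
      rw [hEntry, Equiv.apply_symm_apply, Equiv.apply_symm_apply, sub_zero,
        norm_mul, norm_inv, Complex.norm_natCast, inv_mul_eq_div,
        div_eq_iff hkR.ne'] at h2
      exact h2
    have hT : ∀ ψ : AddChar G ℂ, ψ ≠ 0 →
        (starRingEnd ℂ) (S ψ) * S ψ = (((c*k)^2 : ℝ) : ℂ) := by
      intro ψ hψ
      have hn2 : Complex.normSq (S ψ) = (c * k)^2 := by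
        rw [← Complex.sq_norm, habs ψ hψ]
      rw [← Complex.normSq_eq_conj_mul_self, hn2]
    set N : G → ℕ := fun g => ((D ×ˢ D).filter (fun p => p.1 - p.2 = g)).card with hNdef
    have hNconst : ∀ g : G, g ≠ 0 →
        (n : ℂ) * N g = (k:ℂ)^2 - (((c*k)^2 : ℝ):ℂ) := by
      intro g hg
      have heval : ∑ ψ : AddChar G ℂ, ψ (-g) * ((starRingEnd ℂ) (S ψ) * S ψ)
          = (n:ℂ) * N g := by
        calc ∑ ψ : AddChar G ℂ, ψ (-g) * ((starRingEnd ℂ) (S ψ) * S ψ)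
            = ∑ ψ : AddChar G ℂ, ∑ p ∈ D ×ˢ D, ψ (p.1 - p.2 - g) := by
              refine Finset.sum_congr rfl fun ψ _ => ?_
              rw [hSdef, mulconj_sum, Finset.mul_sum]
              refine Finset.sum_congr rfl fun p _ => ?_
              rw [← AddChar.map_add_eq_mul, neg_add_eq_sub, sub_eq_neg_add, neg_add_eq_sub]
          _ = ∑ p ∈ D ×ˢ D, ∑ ψ : AddChar G ℂ, ψ (p.1 - p.2 - g) := Finset.sum_comm
          _ = ∑ p ∈ D ×ˢ D, if p.1 - p.2 = g then (n:ℂ) else 0 := by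
              refine Finset.sum_congr rfl fun p _ => ?_
              rw [AddChar.sum_apply_eq_ite, hn]
              simp only [sub_eq_zero]
          _ = (n:ℂ) * N g := by
              rw [← Finset.sum_filter, Finset.sum_const, nsmul_eq_mul, mul_comm]
      have heval2 : ∑ ψ : AddChar G ℂ, ψ (-g) * ((starRingEnd ℂ) (S ψ) * S ψ)
          = (k:ℂ)^2 - (((c*k)^2 : ℝ):ℂ) := by
        rw [← Finset.add_sum_erase _ _ (Finset.mem_univ (0 : AddChar G ℂ))]
        have h0 : ((0 : AddChar G ℂ)) (-g) * ((starRingEnd ℂ) (S 0) * S 0) = (k:ℂ)^2 := by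
          rw [hS0, AddChar.zero_apply, one_mul, Complex.conj_natCast, sq]
        rw [h0]
        have hrest : ∑ ψ ∈ (Finset.univ.erase (0 : AddChar G ℂ)),
            ψ (-g) * ((starRingEnd ℂ) (S ψ) * S ψ) = - (((c*k)^2 : ℝ):ℂ) := by
          rw [Finset.sum_congr rfl fun ψ hψ => by
            rw [hT ψ (Finset.ne_of_mem_erase hψ)], ← Finset.sum_mul]
          have hsum : ∑ ψ ∈ Finset.univ.erase (0 : AddChar G ℂ), ψ (-g) = -1 := by
            rw [Finset.sum_erase_eq_sub (Finset.mem_univ _), AddChar.sum_apply_eq_ite,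
              AddChar.zero_apply]
            simp [neg_eq_zero, hg]
          rw [hsum]; ring
        rw [hrest]; ring
      rw [← heval, heval2]
    by_cases hex : ∃ g : G, g ≠ 0
    · obtain ⟨g₀, hg₀⟩ := hex
      refine ⟨N g₀, fun g hg => ?_⟩
      rw [filter_congr_ne D hg]
      have h3 : (n:ℂ) * N g = (n:ℂ) * N g₀ := by rw [hNconst g hg, hNconst g₀ hg₀]
      have h4 := mul_left_cancel₀ (show (n:ℂ) ≠ 0 by exact_mod_cast hn0.ne') h3
      exact_mod_cast h4
    · push_neg at hex
      exact ⟨0, fun g hg => absurd (hex g) hg⟩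
  · rintro ⟨lam, hlam⟩
    refine ⟨?_, ?_, ?_⟩
    · intro i
      have h1 : ∀ t : Fin k, ‖E t i‖^2 = (k:ℝ)⁻¹ := by
        intro t
        rw [hE, norm_mul, norm_inv, Complex.norm_real, Real.norm_eq_abs,
          abs_of_nonneg (Real.sqrt_nonneg _), AddChar.norm_apply, mul_one, inv_pow,
          Real.sq_sqrt (Nat.cast_nonneg k)]
      simp_rw [h1]
      rw [Finset.sum_const, Finset.card_univ, Fintype.card_fin, nsmul_eq_mul,
        mul_inv_cancel₀ hkR.ne']
    · refine ⟨(n:ℝ)/k, by positivity, ?_⟩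
      ext t t'
      rw [Matrix.mul_apply]
      have h1 : ∀ i0 : Fin n, E t i0 * Eᴴ i0 t'
          = ((k:ℕ):ℂ)⁻¹ * (χ i0) ((d t : G) - (d t' : G)) := by
        intro i0
        rw [Matrix.conjTranspose_apply, hE, hE, Complex.star_def, map_mul (starRingEnd ℂ),
          map_inv₀, Complex.conj_ofReal, mul_mul_mul_comm, hsq, ← AddChar.map_neg_eq_conj,
          ← AddChar.map_add_eq_mul, ← sub_eq_add_neg]
      simp_rw [h1, ← Finset.mul_sum]
      rw [show (∑ i0 : Fin n, (χ i0) ((d t : G) - (d t' : G)))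
          = ∑ ψ : AddChar G ℂ, ψ ((d t : G) - (d t' : G)) from Equiv.sum_comp χ (fun ψ : AddChar G ℂ => ψ ((d t : G) - (d t' : G))),
        AddChar.sum_apply_eq_ite, hn, Matrix.smul_apply, Matrix.one_apply]
      by_cases h : t = t'
      · subst h
        rw [sub_self, if_pos rfl, if_pos rfl, smul_eq_mul, mul_one]
        push_cast
        field_simp
      · have hne : (d t : G) - (d t' : G) ≠ 0 :=
          sub_ne_zero.2 fun hc0 => h (d.injective (Subtype.coe_injective hc0))
        rw [if_neg hne, if_neg h, smul_eq_mul, mul_zero, mul_zero]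
    · refine ⟨(k:ℝ)⁻¹ * Real.sqrt ((k:ℝ) - lam), fun i j hij => ?_⟩
      have hψ : χ j - χ i ≠ 0 := sub_ne_zero.2 fun h => hij (χ.injective h).symm
      have hTval : (starRingEnd ℂ) (S (χ j - χ i)) * S (χ j - χ i)
          = (((k:ℝ) - lam : ℝ) : ℂ) := by
        simp only [hSdef]
        rw [mulconj_sum, fiber_sum,
          ← Finset.add_sum_erase _ _ (Finset.mem_univ (0 : G))]
        have h0 : ((((D ×ˢ D).filter (fun p => p.1 - p.2 = (0:G))).card : ℂ))
            * (χ j - χ i) (0:G) = (k:ℂ) := by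
          rw [diag_filter, hD, AddChar.map_zero_eq_one, mul_one]
        rw [h0]
        have hrest : ∑ g ∈ Finset.univ.erase (0:G),
            ((((D ×ˢ D).filter (fun p => p.1 - p.2 = g)).card : ℂ)) * (χ j - χ i) g
            = (lam : ℂ) * ∑ g ∈ Finset.univ.erase (0:G), (χ j - χ i) g := by
          rw [Finset.mul_sum]
          refine Finset.sum_congr rfl fun g hg => ?_
          rw [← filter_congr_ne D (Finset.ne_of_mem_erase hg),
            hlam g (Finset.ne_of_mem_erase hg)]
        rw [hrest, Finset.sum_erase_eq_sub (Finset.mem_univ _), AddChar.map_zero_eq_one,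
          AddChar.sum_eq_zero_iff_ne_zero.2 hψ]
        push_cast
        ring
      have habs : ‖S (χ j - χ i)‖ = Real.sqrt ((k:ℝ) - lam) := by
        rw [Complex.norm_def]
        congr 1
        have h5 := hTval
        rw [← Complex.normSq_eq_conj_mul_self] at h5
        exact_mod_cast h5
      rw [hEntry, norm_mul, norm_inv, Complex.norm_natCast, habs]
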